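/- The function w_l is a valuation with respect to multiplication: for g₁, g₂ in ℚ[χ]/⟨1+χ+⋯+χ^{2^K-1}⟩ one has w_l(g₁·g₂) = w_l(g₁) + w_l(g₂), where w_l(g) = a + b/2^l with a, b determined by the w_l-normal form of g (and w_l(g) = ∞ if 1+χ^{2^l} divides g). -/

import Mathlib

noncomputable section
open Polynomial

/-- The quotient ring ℚ[χ]/⟨1+χ+⋯+χ^{2^K-1}⟩. -/
abbrev QB (K : ℕ) :=
  Polynomial ℚ ⧸ Ideal.span {(∑ i ∈ Finset.range (2 ^ K), X ^ i : Polynomial ℚ)}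

def mkB (K : ℕ) : Polynomial ℚ →+* QB K := Ideal.Quotient.mk _

/-- The quotient ring ℚ[χ]/⟨1+χ^{2^l}⟩. -/
abbrev QS (l : ℕ) := Polynomial ℚ ⧸ Ideal.span {(1 + X ^ (2 ^ l) : Polynomial ℚ)}

def mkS (l : ℕ) : Polynomial ℚ →+* QS l := Ideal.Quotient.mk _

namespace Stmt10Aux

lemma zmod2_one_of_ne_zero : ∀ x : ZMod 2, x ≠ 0 → x = 1 := by decide

lemma intCast_odd {u : ℤ} (hu : Odd u) : ((u : ZMod 2)) = 1 := by
  obtain ⟨k, rfl⟩ := hu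
  push_cast
  rw [show (2 : ZMod 2) = 0 from by decide, zero_mul, zero_add]

lemma odd_of_intCast_one {u : ℤ} (hu : ((u : ZMod 2)) ≠ 0) : Odd u := by
  rw [Ne, ZMod.intCast_zmod_eq_zero_iff_dvd] at hu
  rw [Int.odd_iff]; omega

/-- the cast ring hom ℤ[X] → ℚ[X] -/
abbrev toQ : Polynomial ℤ →+* Polynomial ℚ := Polynomial.mapRingHom (Int.castRingHom ℚ)

/-- the cast ring hom ℤ[X] → 𝔽₂[X] -/
abbrev toZ2 : Polynomial ℤ →+* Polynomial (ZMod 2) := Polynomial.mapRingHom (Int.castRingHom (ZMod 2))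

lemma two_eq_zero_z2x : (2 : Polynomial (ZMod 2)) = 0 := by
  rw [← map_ofNat (C : ZMod 2 →+* Polynomial (ZMod 2)) 2,
    show (2 : ZMod 2) = 0 from by decide, map_zero]

lemma one_sub_X_z2 : (1 - X : Polynomial (ZMod 2)) = X + 1 := by
  have := two_eq_zero_z2x
  linear_combination (-X : Polynomial (ZMod 2)) * this

lemma toZ2_one_sub_X : toZ2 (1 - X) = X + 1 := by
  rw [map_sub, map_one, coe_mapRingHom, map_X, one_sub_X_z2]

lemma X_add_one_ne_zero : (X + 1 : Polynomial (ZMod 2)) ≠ 0 := fun h => by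
  have := congrArg (eval 0) h
  simp at this

lemma eval_one_X_add_one : (X + 1 : Polynomial (ZMod 2)).eval 1 = 0 := by
  simp; decide

lemma xpow_char : (1 + X ^ (2^l) : Polynomial (ZMod 2)) = (X + 1) ^ (2^l) := by
  haveI : Fact (Nat.Prime 2) := ⟨Nat.prime_two⟩
  rw [add_pow_char_pow, one_pow, add_comm]

lemma E0 {l b : ℕ} (hb : b < 2 ^ l) {v h : Polynomial (ZMod 2)}
    (hv : v.eval 1 = 1) (heq : (X + 1) ^ b * v = (X + 1) ^ (2 ^ l) * h) : False := by
  have h2 : (X + 1 : Polynomial (ZMod 2)) ^ (2 ^ l) = (X + 1) ^ b * (X + 1) ^ (2 ^ l - b) := by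
    rw [← pow_add]; congr 1; omega
  rw [h2, mul_assoc] at heq
  have hc := mul_left_cancel₀ (pow_ne_zero b X_add_one_ne_zero) heq
  have he := congrArg (eval 1) hc
  rw [hv, eval_mul, eval_pow, eval_one_X_add_one, zero_pow (by omega : 2 ^ l - b ≠ 0),
    zero_mul] at he
  exact one_ne_zero he

lemma E1 {l b b' : ℕ} (hb : b < 2 ^ l) (hbb : b ≤ b') {v v' h : Polynomial (ZMod 2)}
    (hv : v.eval 1 = 1) (hv' : v'.eval 1 = 1)
    (heq : (X + 1) ^ b * v = (X + 1) ^ b' * v' + (X + 1) ^ (2 ^ l) * h) : b = b' := by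
  by_contra hne
  have hlt : b < b' := lt_of_le_of_ne hbb hne
  have h2 : (X + 1 : Polynomial (ZMod 2)) ^ b' = (X + 1) ^ b * (X + 1) ^ (b' - b) := by
    rw [← pow_add]; congr 1; omega
  have h3 : (X + 1 : Polynomial (ZMod 2)) ^ (2 ^ l) = (X + 1) ^ b * (X + 1) ^ (2 ^ l - b) := by
    rw [← pow_add]; congr 1; omega
  rw [h2, h3, mul_assoc, mul_assoc, ← mul_add] at heq
  have hc := mul_left_cancel₀ (pow_ne_zero b X_add_one_ne_zero) heq
  have he := congrArg (eval 1) hc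
  rw [hv, eval_add, eval_mul, eval_mul, eval_pow, eval_pow, eval_one_X_add_one,
    zero_pow (by omega : b' - b ≠ 0), zero_pow (by omega : 2 ^ l - b ≠ 0), zero_mul, zero_mul,
    add_zero] at he
  exact one_ne_zero he

lemma two_dvd_of_map_eq_zero {f : Polynomial ℤ} (h : toZ2 f = 0) : ∃ g, f = 2 * g := by
  have : (C 2 : Polynomial ℤ) ∣ f := by
    rw [C_dvd_iff_dvd_coeff]
    intro i
    have := congrArg (fun p => coeff p i) h
    simp only [coe_mapRingHom, coeff_map, coeff_zero] at this
    exact (ZMod.intCast_zmod_eq_zero_iff_dvd _ 2).mp this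
  obtain ⟨g, hg⟩ := this
  exact ⟨g, by rw [hg]; norm_num⟩

lemma int_two_factor : ∀ (n : ℕ) (d : ℤ), d.natAbs = n → d ≠ 0 →
    ∃ (c : ℕ) (u : ℤ), Odd u ∧ d = 2 ^ c * u := by
  intro n
  induction n using Nat.strong_induction_on with
  | _ n ih =>
    intro d hn hd
    rcases Int.even_or_odd d with he | ho
    · obtain ⟨d', rfl⟩ := he
      have hd' : d' ≠ 0 := by omega
      have hlt : d'.natAbs < n := by omega
      obtain ⟨c, u, hu, hequ⟩ := ih d'.natAbs hlt d' rfl hd'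
      refine ⟨c + 1, u, hu, ?_⟩
      rw [pow_succ, hequ]; ring
    · exact ⟨0, d, ho, by ring⟩

lemma poly_two_factor : ∀ (n : ℕ) (r : Polynomial ℤ), r.leadingCoeff.natAbs = n → r ≠ 0 →
    ∃ (c : ℕ) (r' : Polynomial ℤ), r = C (2 ^ c) * r' ∧ toZ2 r' ≠ 0 := by
  intro n
  induction n using Nat.strong_induction_on with
  | _ n ih =>
    intro r hn hr
    by_cases h : toZ2 r = 0
    · obtain ⟨r₁, rfl⟩ := two_dvd_of_map_eq_zero h
      have hr₁ : r₁ ≠ 0 := fun h0 => hr (by rw [h0, mul_zero])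
      have h2lc : (2 * r₁).leadingCoeff = 2 * r₁.leadingCoeff := by
        rw [leadingCoeff_mul, show leadingCoeff (2 : Polynomial ℤ) = 2 from by
          rw [← map_ofNat (C : ℤ →+* Polynomial ℤ) 2, leadingCoeff_C]]
      have hlc : r₁.leadingCoeff ≠ 0 := leadingCoeff_ne_zero.mpr hr₁
      have hl : r₁.leadingCoeff.natAbs < n := by
        rw [← hn, h2lc, Int.natAbs_mul, show Int.natAbs 2 = 2 from rfl]
        have := Int.natAbs_pos.mpr hlc
        omega
      obtain ⟨c, r', heq, hne⟩ := ih _ hl r₁ rfl hr₁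
      refine ⟨c + 1, r', ?_, hne⟩
      rw [heq, pow_succ, C_mul, show (C 2 : Polynomial ℤ) = 2 from map_ofNat C 2]
      ring
    · exact ⟨0, r, by simp, h⟩


lemma zmod2_factor : ∀ (n : ℕ) (s : Polynomial (ZMod 2)), s.natDegree = n → s ≠ 0 →
    ∃ (b : ℕ) (w : Polynomial (ZMod 2)), s = (X + 1) ^ b * w ∧ w.eval 1 = 1 ∧ b ≤ s.natDegree := by
  intro n
  induction n using Nat.strong_induction_on with
  | _ n ih =>
    intro s hn hs
    by_cases h1 : s.eval 1 = 0
    · have hdvd : (X - C 1 : Polynomial (ZMod 2)) ∣ s := dvd_iff_isRoot.mpr h1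
      obtain ⟨s₁, hs₁⟩ := hdvd
      have hX : (X - C 1 : Polynomial (ZMod 2)) = X + 1 := by
        have := two_eq_zero_z2x
        rw [C_1]
        linear_combination -this
      rw [hX] at hs₁
      have hs₁ne : s₁ ≠ 0 := fun h0 => hs (by rw [hs₁, h0, mul_zero])
      have hdeg : s.natDegree = s₁.natDegree + 1 := by
        rw [hs₁, natDegree_mul X_add_one_ne_zero hs₁ne, show (X + 1 : Polynomial (ZMod 2)) =
          X + C 1 from by rw [C_1], natDegree_X_add_C]
        ring
      obtain ⟨b, w, hw1, hw2, hw3⟩ := ih s₁.natDegree (by omega) s₁ rfl hs₁ne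
      exact ⟨b + 1, w, by rw [hs₁, hw1, pow_succ]; ring, hw2, by omega⟩
    · exact ⟨0, s, by rw [pow_zero, one_mul], zmod2_one_of_ne_zero _ h1, by omega⟩

lemma prod_pow_ident (K : ℕ) :
    (∑ i ∈ Finset.range (2 ^ K), (X : Polynomial ℚ) ^ i) =
      ∏ j ∈ Finset.range K, (1 + X ^ (2 ^ j)) := by
  induction K with
  | zero => simp
  | succ K ih =>
    rw [Finset.prod_range_succ, ← ih, show 2 ^ (K + 1) = 2 ^ K + 2 ^ K from by omega,
      Finset.sum_range_add]
    simp only [pow_add, ← Finset.mul_sum]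
    ring

lemma mkS_eq_iff {l : ℕ} (f g : Polynomial ℚ) :
    mkS l f = mkS l g ↔ (1 + X ^ (2 ^ l) : Polynomial ℚ) ∣ (f - g) := by
  simp only [mkS]
  rw [Ideal.Quotient.eq, Ideal.mem_span_singleton]

lemma mkS_congr {K l : ℕ} (hK : 1 ≤ K) (hl : l ≤ K - 1) {p p' : Polynomial ℚ}
    (h : mkB K p = mkB K p') : mkS l p = mkS l p' := by
  rw [mkS_eq_iff]
  simp only [mkB] at h
  have h1 : (∑ i ∈ Finset.range (2 ^ K), (X : Polynomial ℚ) ^ i) ∣ (p - p') :=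
    Ideal.mem_span_singleton.mp (Ideal.Quotient.eq.mp h)
  refine dvd_trans ?_ h1
  rw [prod_pow_ident K]
  exact Finset.dvd_prod_of_mem _ (Finset.mem_range.mpr (by omega))

lemma monic_MZ (l : ℕ) : (1 + X ^ (2 ^ l) : Polynomial ℤ).Monic := by
  rw [add_comm, ← C_1]
  exact monic_X_pow_add_C _ (by positivity)

lemma toQ_MZ (l : ℕ) : toQ (1 + X ^ (2 ^ l)) = (1 + X ^ (2 ^ l) : Polynomial ℚ) := by
  simp

lemma toZ2_MZ (l : ℕ) : toZ2 (1 + X ^ (2 ^ l)) = (X + 1) ^ (2 ^ l) := by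
  rw [map_add, map_one, map_pow, coe_mapRingHom, map_X, xpow_char]

lemma dvd_descend {l : ℕ} {f : Polynomial ℤ}
    (h : (1 + X ^ (2 ^ l) : Polynomial ℚ) ∣ toQ f) : (1 + X ^ (2 ^ l) : Polynomial ℤ) ∣ f := by
  rw [← toQ_MZ l] at h
  exact (map_dvd_map (Int.castRingHom ℚ) Int.cast_injective (monic_MZ l)).mp h

lemma h_poly (l : ℕ) : ∃ h : Polynomial ℤ,
    (1 - X) ^ (2 ^ l) = 1 + X ^ (2 ^ l) + 2 * h ∧ h.eval 1 = -1 := by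
  have hz : toZ2 ((1 - X) ^ (2 ^ l) - (1 + X ^ (2 ^ l))) = 0 := by
    rw [map_sub, map_pow, toZ2_one_sub_X, toZ2_MZ, sub_self]
  obtain ⟨h, hh⟩ := two_dvd_of_map_eq_zero hz
  refine ⟨h, by linear_combination hh, ?_⟩
  have he := congrArg (eval 1) hh
  simp only [eval_sub, eval_pow, eval_sub, eval_one, eval_add, eval_X, eval_mul,
    eval_ofNat] at he
  have h2l : (1 : ℤ) - 1 = 0 := by ring
  rw [h2l, zero_pow (by positivity : 2 ^ l ≠ 0), one_pow] at he
  omega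


lemma odd_ne_zero {u : ℤ} (hu : Odd u) : u ≠ 0 := by
  rw [Int.odd_iff] at hu; omega

lemma toQ_G (b : ℕ) (v₁ v₂ : Polynomial ℤ) :
    toQ ((1 - X) ^ b * v₁ + 2 * v₂) =
      (1 - X) ^ b * v₁.map (Int.castRingHom ℚ) + 2 * v₂.map (Int.castRingHom ℚ) := by
  simp only [map_add, map_mul, map_pow, map_sub, map_one, coe_mapRingHom, map_X,
    Polynomial.map_ofNat]

lemma toZ2_two : toZ2 2 = 0 := by
  rw [coe_mapRingHom, Polynomial.map_ofNat, two_eq_zero_z2x]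

lemma toZ2_G (b : ℕ) (v₁ v₂ : Polynomial ℤ) :
    toZ2 ((1 - X) ^ b * v₁ + 2 * v₂) = (X + 1) ^ b * toZ2 v₁ := by
  rw [map_add, map_mul, map_mul, map_pow, toZ2_one_sub_X, toZ2_two, zero_mul, add_zero]

lemma toZ2_eval_one {v : Polynomial ℤ} (hv : Odd (v.eval 1)) : (toZ2 v).eval 1 = 1 := by
  rw [coe_mapRingHom, eval_one_map]
  exact intCast_odd hv

lemma E1' {l b b' : ℕ} (hb : b < 2 ^ l) (hb' : b' < 2 ^ l) {v v' h : Polynomial (ZMod 2)}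
    (hv : v.eval 1 = 1) (hv' : v'.eval 1 = 1)
    (heq : (X + 1) ^ b * v = (X + 1) ^ b' * v' + (X + 1) ^ (2 ^ l) * h) : b = b' := by
  rcases le_total b b' with hbb | hbb
  · exact E1 hb hbb hv hv' heq
  · refine (E1 hb' hbb hv' hv (h := -h) ?_).symm
    linear_combination -heq

lemma NF_core {l : ℕ} {a a' u u' : ℤ} {b b' : ℕ} {v₁ v₂ v₁' v₂' : Polynomial ℤ}
    (hu : Odd u) (hu' : Odd u') (hb : b < 2 ^ l) (hb' : b' < 2 ^ l)
    (hv : Odd (v₁.eval 1)) (hv' : Odd (v₁'.eval 1)) (haa : a ≤ a')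
    (h : mkS l (C ((2 : ℚ) ^ a / (u : ℚ)) *
        ((1 - X) ^ b * v₁.map (Int.castRingHom ℚ) + 2 * v₂.map (Int.castRingHom ℚ))) =
      mkS l (C ((2 : ℚ) ^ a' / (u' : ℚ)) *
        ((1 - X) ^ b' * v₁'.map (Int.castRingHom ℚ) + 2 * v₂'.map (Int.castRingHom ℚ)))) :
    a = a' ∧ b = b' := by
  have hu0 : (u : ℚ) ≠ 0 := Int.cast_ne_zero.mpr (odd_ne_zero hu)
  have hu0' : (u' : ℚ) ≠ 0 := Int.cast_ne_zero.mpr (odd_ne_zero hu')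
  have h2a0 : ((2 : ℚ) ^ a) ≠ 0 := zpow_ne_zero _ two_ne_zero
  set e := (a' - a).toNat with he
  have hae : a' = a + e := by omega
  have h2a : (2 : ℚ) ^ a' = (2 : ℚ) ^ a * 2 ^ e := by
    rw [hae, zpow_add₀ two_ne_zero, zpow_natCast]
  set k : ℚ := (u : ℚ) * u' * ((2 : ℚ) ^ a)⁻¹ with hk
  have hk1 : k * ((2 : ℚ) ^ a / u) = (u' : ℚ) := by
    rw [hk]; field_simp
  have hk2 : k * ((2 : ℚ) ^ a' / u') = ((u * 2 ^ e : ℤ) : ℚ) := by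
    rw [hk, h2a]; push_cast; field_simp
  rw [mkS_eq_iff] at h
  have h2 := h.mul_left (C k)
  rw [mul_sub, ← mul_assoc, ← C_mul, hk1, ← mul_assoc, ← C_mul, hk2] at h2
  have key : C ((u' : ℤ) : ℚ) *
      ((1 - X) ^ b * v₁.map (Int.castRingHom ℚ) + 2 * v₂.map (Int.castRingHom ℚ)) -
      C ((u * 2 ^ e : ℤ) : ℚ) *
      ((1 - X) ^ b' * v₁'.map (Int.castRingHom ℚ) + 2 * v₂'.map (Int.castRingHom ℚ)) =
      toQ (C u' * ((1 - X) ^ b * v₁ + 2 * v₂) - C (u * 2 ^ e) * ((1 - X) ^ b' * v₁' + 2 * v₂')) := by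
    rw [map_sub, map_mul, map_mul, toQ_G, toQ_G, coe_mapRingHom, map_C, map_C]
    norm_num
  rw [key] at h2
  obtain ⟨j, hj⟩ := dvd_descend h2
  have hz2 := congrArg toZ2 hj
  simp only [map_sub, map_mul, toZ2_G, toZ2_MZ, coe_mapRingHom, map_C,
    Int.coe_castRingHom] at hz2
  rw [intCast_odd hu', C_1, one_mul] at hz2
  rcases Nat.eq_zero_or_pos e with he0 | hepos
  · rw [he0] at hz2
    simp only [pow_zero, Int.cast_one, map_one, mul_one, intCast_odd hu, C_1, one_mul] at hz2
    have heq : (X + 1) ^ b * map (Int.castRingHom (ZMod 2)) v₁ =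
        (X + 1) ^ b' * map (Int.castRingHom (ZMod 2)) v₁' +
          (X + 1) ^ (2 ^ l) * map (Int.castRingHom (ZMod 2)) j := by
      linear_combination hz2
    exact ⟨by omega, E1' hb hb' (toZ2_eval_one hv) (toZ2_eval_one hv') heq⟩
  · exfalso
    have hc : (((2 : ℤ) ^ e : ℤ) : ZMod 2) = 0 := by
      push_cast
      rw [show (2 : ZMod 2) = 0 from by decide, zero_pow (by omega : e ≠ 0)]
    rw [hc, map_zero, mul_zero, zero_mul, sub_zero] at hz2
    exact E0 hb (toZ2_eval_one hv) hz2

end Stmt10Aux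

/-- `IsNF K l g w` : g admits a w_l-normal form pr_l(g) = (2^a/u)·((1-χ)^b·v₁ + 2·v₂)
with u, v₁(1) odd, 0 ≤ b < 2^l, and w = a + b/2^l. -/
def IsNF (K l : ℕ) (g : QB K) (w : ℚ) : Prop :=
  ∃ (p : Polynomial ℚ) (a u : ℤ) (b : ℕ) (v₁ v₂ : Polynomial ℤ),
    mkB K p = g ∧ Odd u ∧ b < 2 ^ l ∧ Odd (v₁.eval 1) ∧
    mkS l p = mkS l (C ((2 : ℚ) ^ a / (u : ℚ)) *
      ((1 - X) ^ b * v₁.map (Int.castRingHom ℚ) + 2 * v₂.map (Int.castRingHom ℚ))) ∧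
    w = a + (b : ℚ) / 2 ^ l

namespace Stmt10Aux

lemma NF_unique {K l : ℕ} (hK : 1 ≤ K) (hl : l ≤ K - 1) {g : QB K} {w w' : ℚ}
    (h1 : IsNF K l g w) (h2 : IsNF K l g w') : w = w' := by
  obtain ⟨p, a, u, b, v₁, v₂, hp, hu, hb, hv, hmk, hw⟩ := h1
  obtain ⟨p', a', u', b', v₁', v₂', hp', hu', hb', hv', hmk', hw'⟩ := h2
  have hpp : mkS l p = mkS l p' := mkS_congr hK hl (by rw [hp, hp'])
  have heq := hmk.symm.trans (hpp.trans hmk')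
  have hab : a = a' ∧ b = b' := by
    rcases le_total a a' with hle | hle
    · exact NF_core hu hu' hb hb' hv hv' hle heq
    · have := NF_core hu' hu hb' hb hv' hv hle heq.symm
      exact ⟨this.1.symm, this.2.symm⟩
  rw [hw, hw', hab.1, hab.2]

lemma NF_ne_zero {K l : ℕ} (hK : 1 ≤ K) (hl : l ≤ K - 1) {g : QB K} {w : ℚ}
    (h : IsNF K l g w) (p : Polynomial ℚ) (hp : mkB K p = g) : mkS l p ≠ 0 := by
  obtain ⟨p₀, a, u, b, v₁, v₂, hp₀, hu, hb, hv, hmk, -⟩ := h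
  have hpp : mkS l p = mkS l p₀ := mkS_congr hK hl (by rw [hp, hp₀])
  rw [hpp, hmk]
  intro h0
  have hq : ((2 : ℚ) ^ a / (u : ℚ)) ≠ 0 :=
    div_ne_zero (zpow_ne_zero _ two_ne_zero) (Int.cast_ne_zero.mpr (odd_ne_zero hu))
  have hdvd : (1 + X ^ (2 ^ l) : Polynomial ℚ) ∣ C ((2 : ℚ) ^ a / (u : ℚ)) *
      ((1 - X) ^ b * v₁.map (Int.castRingHom ℚ) + 2 * v₂.map (Int.castRingHom ℚ)) := by
    have := (mkS_eq_iff (C ((2 : ℚ) ^ a / (u : ℚ)) *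
      ((1 - X) ^ b * v₁.map (Int.castRingHom ℚ) + 2 * v₂.map (Int.castRingHom ℚ))) 0).mp
      (by rw [map_zero (mkS l)]; exact h0)
    simpa using this
  have hdvd2 : (1 + X ^ (2 ^ l) : Polynomial ℚ) ∣ toQ ((1 - X) ^ b * v₁ + 2 * v₂) := by
    have h3 := hdvd.mul_left (C ((2 : ℚ) ^ a / (u : ℚ))⁻¹)
    rw [← mul_assoc, ← C_mul, inv_mul_cancel₀ hq, C_1, one_mul] at h3
    rw [toQ_G]
    exact h3
  obtain ⟨j, hj⟩ := dvd_descend hdvd2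
  have hz2 := congrArg toZ2 hj
  rw [toZ2_G, map_mul, toZ2_MZ] at hz2
  exact E0 hb (toZ2_eval_one hv) hz2


lemma cast_mul_ne {u₁ u₂ : ℤ} (h₁ : Odd u₁) (h₂ : Odd u₂) : ((u₁ : ℚ)) ≠ 0 ∧ ((u₂ : ℚ)) ≠ 0 :=
  ⟨Int.cast_ne_zero.mpr (odd_ne_zero h₁), Int.cast_ne_zero.mpr (odd_ne_zero h₂)⟩

lemma NF_mul {K l : ℕ} {g₁ g₂ : QB K} {w₁ w₂ : ℚ}
    (h₁ : IsNF K l g₁ w₁) (h₂ : IsNF K l g₂ w₂) : IsNF K l (g₁ * g₂) (w₁ + w₂) := by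
  obtain ⟨p₁, a₁, u₁, b₁, v₁, v₂, hp₁, hu₁, hb₁, hv₁, hm₁, hw₁⟩ := h₁
  obtain ⟨p₂, a₂, u₂, b₂, t₁, t₂, hp₂, hu₂, hb₂, ht₁, hm₂, hw₂⟩ := h₂
  obtain ⟨hcu₁, hcu₂⟩ := cast_mul_ne hu₁ hu₂
  have hC2 : (2 : Polynomial ℚ) = C 2 := (map_ofNat C 2).symm
  have step1 : mkS l (p₁ * p₂) =
      mkS l (C (((2:ℚ)^a₁/u₁) * ((2:ℚ)^a₂/u₂)) *
        toQ (((1 - X) ^ b₁ * v₁ + 2 * v₂) * ((1 - X) ^ b₂ * t₁ + 2 * t₂))) := by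
    rw [map_mul, hm₁, hm₂, ← map_mul]
    congr 1
    rw [← toQ_G b₁ v₁ v₂, ← toQ_G b₂ t₁ t₂, C_mul, map_mul]
    ring
  by_cases hbb : b₁ + b₂ < 2 ^ l
  · refine ⟨p₁ * p₂, a₁ + a₂, u₁ * u₂, b₁ + b₂, v₁ * t₁,
      (1 - X) ^ b₁ * (v₁ * t₂) + (1 - X) ^ b₂ * (t₁ * v₂) + 2 * (v₂ * t₂),
      by rw [map_mul, hp₁, hp₂], hu₁.mul hu₂, hbb, ?_, ?_, ?_⟩
    · rw [eval_mul]; exact hv₁.mul ht₁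
    · rw [step1, ← toQ_G]
      congr 2
      · rw [zpow_add₀ (two_ne_zero)]
        push_cast
        field_simp
      · congr 1
        ring
    · rw [hw₁, hw₂]
      push_cast
      ring
  · obtain ⟨hh, hhe, hh1⟩ := h_poly l
    set c : ℕ := b₁ + b₂ - 2 ^ l with hcdef
    have hclt : c < 2 ^ l := by omega
    have e1 : ((1 - X : Polynomial ℤ)) ^ b₁ * (1 - X) ^ b₂ =
        (1 - X) ^ c * (1 + X ^ (2 ^ l) + 2 * hh) := by
      rw [← pow_add, show b₁ + b₂ = c + 2 ^ l from by omega, pow_add, hhe]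
    have e2 : ((1 - X : Polynomial ℤ)) ^ b₁ = (1 - X) ^ c * (1 - X) ^ (b₁ - c) := by
      rw [← pow_add]; congr 1; omega
    have e3 : ((1 - X : Polynomial ℤ)) ^ b₂ = (1 - X) ^ c * (1 - X) ^ (b₂ - c) := by
      rw [← pow_add]; congr 1; omega
    have idZ : ((1 - X) ^ b₁ * v₁ + 2 * v₂) * ((1 - X) ^ b₂ * t₁ + 2 * t₂) =
        (1 + X ^ (2 ^ l)) * ((1 - X) ^ c * (v₁ * t₁)) +
          2 * ((1 - X) ^ c * (hh * (v₁ * t₁) + (1 - X) ^ (b₁ - c) * (v₁ * t₂) +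
            (1 - X) ^ (b₂ - c) * (t₁ * v₂)) + 2 * (v₂ * t₂)) := by
      linear_combination (v₁ * t₁) * e1 + 2 * (v₁ * t₂) * e2 + 2 * (t₁ * v₂) * e3
    have hdv : (1 + X ^ (2 ^ l) : Polynomial ℚ) ∣
        toQ (((1 - X) ^ b₁ * v₁ + 2 * v₂) * ((1 - X) ^ b₂ * t₁ + 2 * t₂)) -
          toQ (2 * ((1 - X) ^ c * (hh * (v₁ * t₁) + (1 - X) ^ (b₁ - c) * (v₁ * t₂) +
            (1 - X) ^ (b₂ - c) * (t₁ * v₂)) + 2 * (v₂ * t₂))) := by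
      refine ⟨toQ ((1 - X) ^ c * (v₁ * t₁)), ?_⟩
      rw [← map_sub, ← toQ_MZ l, ← map_mul]
      exact congrArg toQ (by linear_combination idZ)
    have step2 := (mkS_eq_iff _ _).mpr hdv
    refine ⟨p₁ * p₂, a₁ + a₂ + 1, u₁ * u₂, c,
      hh * (v₁ * t₁) + (1 - X) ^ (b₁ - c) * (v₁ * t₂) + (1 - X) ^ (b₂ - c) * (t₁ * v₂),
      v₂ * t₂, by rw [map_mul, hp₁, hp₂], hu₁.mul hu₂, hclt, ?_, ?_, ?_⟩
    · have hb1c : b₁ - c ≠ 0 := by omega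
      have hb2c : b₂ - c ≠ 0 := by omega
      simp only [eval_add, eval_mul, eval_pow, eval_sub, eval_one, eval_X, hh1, sub_self,
        zero_pow hb1c, zero_pow hb2c, zero_mul, add_zero]
      rw [neg_one_mul]
      exact (hv₁.mul ht₁).neg
    · rw [step1, map_mul, step2, ← map_mul, ← toQ_G]
      congr 1
      rw [show toQ (2 * ((1 - X) ^ c * (hh * (v₁ * t₁) + (1 - X) ^ (b₁ - c) * (v₁ * t₂) +
            (1 - X) ^ (b₂ - c) * (t₁ * v₂)) + 2 * (v₂ * t₂))) =
          2 * toQ (((1 - X) ^ c * (hh * (v₁ * t₁) + (1 - X) ^ (b₁ - c) * (v₁ * t₂) +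
            (1 - X) ^ (b₂ - c) * (t₁ * v₂)) + 2 * (v₂ * t₂))) from by
        rw [map_mul]; norm_num, toQ_G]
      rw [hC2, ← mul_assoc, ← C_mul]
      congr 2
      · rw [show a₁ + a₂ + 1 = a₁ + (a₂ + 1) from by ring, zpow_add₀ (two_ne_zero),
          zpow_add₀ (two_ne_zero), zpow_one]
        push_cast
        field_simp
    · rw [hw₁, hw₂]
      have hbq : (b₁ : ℚ) + b₂ = 2 ^ l + c := by
        have : b₁ + b₂ = 2 ^ l + c := by omega
        exact_mod_cast congrArg (Nat.cast : ℕ → ℚ) this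
      have h2l : ((2 : ℚ) ^ l) ≠ 0 := pow_ne_zero _ two_ne_zero
      push_cast
      field_simp
      linear_combination hbq

lemma NF_exists {K l : ℕ} (p : Polynomial ℚ) (hp : mkS l p ≠ 0) :
    ∃ w, IsNF K l (mkB K p) w := by
  classical
  obtain ⟨d0, hd0⟩ := IsLocalization.integerNormalization_map_to_map (nonZeroDivisors ℤ) p
  set q : Polynomial ℤ := IsLocalization.integerNormalization (nonZeroDivisors ℤ) p with hqdef
  set d : ℤ := (d0 : ℤ) with hddef
  have hd : d ≠ 0 := nonZeroDivisors.coe_ne_zero d0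
  have hdq0 : (d : ℚ) ≠ 0 := Int.cast_ne_zero.mpr hd
  rw [algebraMap_int_eq] at hd0
  have hP : p = C ((d : ℚ))⁻¹ * toQ q := by
    have h1 : toQ q = C (d : ℚ) * p := by
      rw [coe_mapRingHom]
      rw [hd0, zsmul_eq_mul]
      norm_cast
    rw [h1, ← mul_assoc, ← C_mul, inv_mul_cancel₀ hdq0, C_1, one_mul]
  set M : Polynomial ℤ := 1 + X ^ (2 ^ l) with hMdef
  set r : Polynomial ℤ := q %ₘ M with hrdef
  have hqr : (1 + X ^ (2 ^ l) : Polynomial ℚ) ∣ toQ q - toQ r := by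
    refine ⟨toQ (q /ₘ M), ?_⟩
    have hmd := modByMonic_add_div q M
    rw [← toQ_MZ l, ← map_mul]
    rw [show (1 + X ^ 2 ^ l : Polynomial ℤ) * (q /ₘ M) = q - r from by
      rw [hrdef, hMdef]; linear_combination hmd]
    rw [map_sub]
  have hmkqr : mkS l (toQ q) = mkS l (toQ r) := (mkS_eq_iff _ _).mpr hqr
  have e1 : mkS l p = mkS l (C ((d : ℚ))⁻¹ * toQ r) := by
    rw [hP, map_mul, map_mul, hmkqr]
  have hr0 : r ≠ 0 := by
    intro h0
    apply hp
    rw [e1, h0, map_zero, mul_zero, map_zero]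
  have hdeg : r.natDegree < 2 ^ l := by
    have h1 : degree r < degree M := degree_modByMonic_lt q (monic_MZ l)
    have h2 : degree M = (2 ^ l : ℕ) := by
      rw [hMdef, add_comm, ← C_1, degree_X_pow_add_C (by positivity)]
    rw [(natDegree_lt_iff_degree_lt hr0)]
    rw [← h2]
    exact h1
  obtain ⟨c, r', hrr, hr'2⟩ := poly_two_factor _ r rfl hr0
  have hr'0 : r' ≠ 0 := fun h0 => hr'2 (by rw [h0, map_zero])
  have hdeg' : r'.natDegree < 2 ^ l := by
    have := natDegree_mul (p := C ((2 : ℤ) ^ c)) (q := r')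
      (by simpa using pow_ne_zero c (two_ne_zero (α := ℤ))) hr'0
    rw [← hrr, natDegree_C] at this
    omega
  obtain ⟨b, w2, hw1, hw2, hw3⟩ := zmod2_factor _ (toZ2 r') rfl hr'2
  have hblt : b < 2 ^ l := by
    have hle : (toZ2 r').natDegree ≤ r'.natDegree := natDegree_map_le
    omega
  obtain ⟨v₁, hv₁⟩ := Polynomial.map_surjective (Int.castRingHom (ZMod 2))
    (ZMod.intCast_surjective) w2
  have hv1odd : Odd (v₁.eval 1) := by
    apply odd_of_intCast_one
    have h1 : (toZ2 v₁).eval 1 = 1 := by rw [coe_mapRingHom, hv₁, hw2]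
    rw [coe_mapRingHom, eval_one_map] at h1
    rw [show ((v₁.eval 1 : ℤ) : ZMod 2) = (Int.castRingHom (ZMod 2)) (v₁.eval 1) from rfl, h1]
    exact one_ne_zero
  have hsub : toZ2 (r' - (1 - X) ^ b * v₁) = 0 := by
    rw [map_sub, map_mul, map_pow, toZ2_one_sub_X, show toZ2 v₁ = w2 from by
      rw [coe_mapRingHom, hv₁], ← hw1, sub_self]
  obtain ⟨v₂, hv₂⟩ := two_dvd_of_map_eq_zero hsub
  have hr' : r' = (1 - X) ^ b * v₁ + 2 * v₂ := by linear_combination hv₂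
  obtain ⟨c', u, hu, hd'⟩ := int_two_factor _ d rfl hd
  set a : ℤ := (c : ℤ) - c' with hadef
  have hsc : ((d : ℚ))⁻¹ * ((2 : ℚ) ^ c) = (2 : ℚ) ^ a / (u : ℚ) := by
    have hdq : (d : ℚ) = 2 ^ c' * (u : ℚ) := by
      rw [hd']; push_cast; ring
    have hu0 : (u : ℚ) ≠ 0 := Int.cast_ne_zero.mpr (odd_ne_zero hu)
    have h2 : (2 : ℚ) ^ a = (2 : ℚ) ^ c / (2 : ℚ) ^ c' := by
      rw [hadef, zpow_sub₀ two_ne_zero, zpow_natCast, zpow_natCast]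
    rw [hdq, h2]
    have h2c' : ((2 : ℚ) ^ c') ≠ 0 := pow_ne_zero _ two_ne_zero
    field_simp
  have e2 : C ((d : ℚ))⁻¹ * toQ r = C ((2 : ℚ) ^ a / (u : ℚ)) *
      ((1 - X) ^ b * v₁.map (Int.castRingHom ℚ) + 2 * v₂.map (Int.castRingHom ℚ)) := by
    rw [hrr, hr', map_mul, coe_mapRingHom, map_C, ← coe_mapRingHom (Int.castRingHom ℚ), toQ_G,
      ← mul_assoc, ← C_mul]
    congr 1
    rw [← hsc]
    congr 1
    simp only [Int.coe_castRingHom]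
    push_cast
    ring
  refine ⟨a + (b : ℚ) / 2 ^ l, p, a, u, b, v₁, v₂, rfl, hu, hblt, hv1odd, ?_, rfl⟩
  rw [e1, e2]

end Stmt10Aux

open Classical in
/-- The valuation w_l : w_l(g) = a + b/2^l from the normal form, and ∞ if
1+χ^{2^l} divides g (i.e. no normal form exists). -/
def wl (K l : ℕ) (g : QB K) : WithTop ℚ :=
  if h : ∃ w : ℚ, IsNF K l g w then (h.choose : WithTop ℚ) else ⊤

/-- w_l is multiplicative: w_l(g₁·g₂) = w_l(g₁) + w_l(g₂) (with x + ∞ = ∞). -/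
theorem stmt10 (K l : ℕ) (hK : 1 ≤ K) (hl : l ≤ K - 1) (g₁ g₂ : QB K) :
    wl K l (g₁ * g₂) = wl K l g₁ + wl K l g₂ := by
  classical
  have key : ∀ x y : QB K, (¬ ∃ w, IsNF K l x w) → ¬ ∃ w, IsNF K l (x * y) w := by
    rintro x y hx ⟨w, hw⟩
    obtain ⟨px, hpx0⟩ := Ideal.Quotient.mk_surjective x
    obtain ⟨py, hpy0⟩ := Ideal.Quotient.mk_surjective y
    have hpx : mkB K px = x := hpx0
    have hpy : mkB K py = y := hpy0
    have hz : mkS l px = 0 := by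
      by_contra hnz
      exact hx (hpx ▸ Stmt10Aux.NF_exists px hnz)
    have hne := Stmt10Aux.NF_ne_zero hK hl hw (px * py) (by rw [map_mul, hpx, hpy])
    exact hne (by rw [map_mul, hz, zero_mul])
  by_cases h₁ : ∃ w, IsNF K l g₁ w
  · by_cases h₂ : ∃ w, IsNF K l g₂ w
    · have hprod : IsNF K l (g₁ * g₂) (h₁.choose + h₂.choose) :=
        Stmt10Aux.NF_mul h₁.choose_spec h₂.choose_spec
      have hex : ∃ w, IsNF K l (g₁ * g₂) w := ⟨_, hprod⟩
      simp only [wl]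
      rw [dif_pos hex, dif_pos h₁, dif_pos h₂,
        Stmt10Aux.NF_unique hK hl hex.choose_spec hprod]
      exact_mod_cast rfl
    · have hne : ¬ ∃ w, IsNF K l (g₁ * g₂) w := by
        rw [mul_comm]
        exact key g₂ g₁ h₂
      simp only [wl]
      rw [dif_neg hne, dif_neg h₂, add_top]
  · have hne : ¬ ∃ w, IsNF K l (g₁ * g₂) w := key g₁ g₂ h₁
    simp only [wl]
    rw [dif_neg hne, dif_neg h₁, top_add]
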